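/- Let U ⊆ ℝ^n be a nonempty connected open set and let f : U → ℝ be a function that is regular on axis-parallel intervals. Then there exist real polynomials p, q in n variables, with q not the zero polynomial, such that f(x) = p(x)/q(x) for every x ∈ U with q(x) ≠ 0 (so f agrees with the rational function p/q on the dense open subset {x ∈ U : q(x) ≠ 0} of U). (Corollary 7.2, stated without the codimension-two claim on the polar set.) -/

import Mathlib

open MvPolynomial

/-- `f` is regular on axis-parallel open intervals contained in `U`: on every open
interval `I ⊆ ℝ` whose image under `t ↦ x + t • eᵢ` lies in `U`, and at every `t₀ ∈ I`,
the function `t ↦ f (x + t • eᵢ)` is represented on `I` by a quotient of one-variable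
polynomials whose denominator does not vanish at `t₀`. -/
def RegularOnAxisParallelIntervals (n : ℕ) (U : Set (Fin n → ℝ))
    (f : (Fin n → ℝ) → ℝ) : Prop :=
  ∀ (i : Fin n) (x : Fin n → ℝ) (I : Set ℝ), IsOpen I → I.OrdConnected →
    (∀ t ∈ I, x + t • (Pi.single i 1 : Fin n → ℝ) ∈ U) →
    ∀ t₀ ∈ I, ∃ p q : Polynomial ℝ, q.eval t₀ ≠ 0 ∧
      ∀ t ∈ I, q.eval t ≠ 0 →
        f (x + t • (Pi.single i 1 : Fin n → ℝ)) = p.eval t / q.eval t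

noncomputable section RatAux

variable {N : ℕ}

/-- substitute variable `i` by the polynomial variable, other variables kept as constants -/
def psi (i : Fin N) : MvPolynomial (Fin N) ℝ →ₐ[ℝ] Polynomial (MvPolynomial (Fin N) ℝ) :=
  MvPolynomial.aeval (fun j => if j = i then Polynomial.X else Polynomial.C (MvPolynomial.X j))

def linePoly (x : Fin N → ℝ) (i : Fin N) (A : MvPolynomial (Fin N) ℝ) : Polynomial ℝ :=
  (psi i A).map (MvPolynomial.eval x)

lemma linePoly_eval (x : Fin N → ℝ) (i : Fin N) (s : ℝ) (A : MvPolynomial (Fin N) ℝ) :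
    (linePoly x i A).eval s = MvPolynomial.eval (Function.update x i s) A := by
  have h : ((Polynomial.evalRingHom s).comp
      ((Polynomial.mapRingHom (MvPolynomial.eval x)).comp (psi i).toRingHom))
      = (MvPolynomial.eval (Function.update x i s) : MvPolynomial (Fin N) ℝ →+* ℝ) := by
    apply MvPolynomial.ringHom_ext
    · intro r; simp [psi]
    · intro j
      by_cases hj : j = i
      · subst hj; simp [psi, Function.update_apply]
      · simp [psi, hj, Function.update_apply]
  have := RingHom.congr_fun h A
  simpa [linePoly] using this

lemma add_smul_single_eq_update (x : Fin N → ℝ) (i : Fin N) (t : ℝ) :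
    x + t • (Pi.single i 1 : Fin N → ℝ) = Function.update x i (x i + t) := by
  funext j
  by_cases hj : j = i
  · subst hj; simp
  · simp [hj, Function.update_apply, Pi.single_apply]

lemma eval_line (x : Fin N → ℝ) (i : Fin N) (t : ℝ) (A : MvPolynomial (Fin N) ℝ) :
    MvPolynomial.eval (x + t • (Pi.single i 1 : Fin N → ℝ)) A
      = (linePoly x i A).eval (x i + t) := by
  rw [add_smul_single_eq_update, linePoly_eval]

lemma psi_injective (i : Fin N) : Function.Injective (psi i) := by
  have h : ((Polynomial.evalRingHom (MvPolynomial.X i)).comp (psi i).toRingHom)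
      = RingHom.id (MvPolynomial (Fin N) ℝ) := by
    apply MvPolynomial.ringHom_ext
    · intro r; simp [psi]
    · intro j
      by_cases hj : j = i
      · subst hj; simp [psi]
      · simp [psi, hj]
  intro a b hab
  have := RingHom.congr_fun h a
  have h2 := RingHom.congr_fun h b
  simp only [RingHom.coe_comp, Function.comp_apply, RingHom.id_apply, AlgHom.toRingHom_eq_coe,
    RingHom.coe_coe] at this h2
  rw [← this, ← h2, hab]

def peel (i : Fin N) (A : MvPolynomial (Fin N) ℝ) : MvPolynomial (Fin N) ℝ :=
  (psi i A).leadingCoeff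

lemma peel_ne_zero {i : Fin N} {A : MvPolynomial (Fin N) ℝ} (hA : A ≠ 0) : peel i A ≠ 0 := by
  have h1 : psi i A ≠ 0 := by
    intro h
    exact hA (psi_injective i (by rw [h, map_zero]))
  intro h
  exact h1 (Polynomial.leadingCoeff_eq_zero.mp h)

lemma coeff_linePoly (x : Fin N → ℝ) (i : Fin N) (A : MvPolynomial (Fin N) ℝ) (k : ℕ) :
    (linePoly x i A).coeff k = MvPolynomial.eval x ((psi i A).coeff k) := by
  simp [linePoly, Polynomial.coeff_map]

lemma linePoly_ne_zero {x : Fin N → ℝ} {i : Fin N} {A : MvPolynomial (Fin N) ℝ}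
    (h : MvPolynomial.eval x (peel i A) ≠ 0) : linePoly x i A ≠ 0 := by
  intro h0
  apply h
  have := coeff_linePoly x i A (psi i A).natDegree
  rw [h0] at this
  rw [Polynomial.coeff_zero] at this
  rw [peel, Polynomial.leadingCoeff]
  exact this.symm

/-- `A` doesn't depend (as a function) on the coordinates in `s`. -/
def Indep (s : Set (Fin N)) (A : MvPolynomial (Fin N) ℝ) : Prop :=
  ∀ x y : Fin N → ℝ, (∀ j, j ∉ s → x j = y j) → MvPolynomial.eval x A = MvPolynomial.eval y A

lemma linePoly_congr {s : Set (Fin N)} {A : MvPolynomial (Fin N) ℝ} (hA : Indep s A)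
    {x y : Fin N → ℝ} {i : Fin N} (hxy : ∀ j, j ∉ s → j ≠ i → x j = y j) :
    linePoly x i A = linePoly y i A := by
  apply Polynomial.funext
  intro r
  rw [linePoly_eval, linePoly_eval]
  apply hA
  intro j hj
  by_cases hji : j = i
  · subst hji; simp
  · simp [Function.update_apply, hji, hxy j hj hji]

lemma indep_peel {s : Set (Fin N)} {A : MvPolynomial (Fin N) ℝ} (hA : Indep s A) (i : Fin N) :
    Indep (insert i s) (peel i A) := by
  intro x y hxy
  have hx : MvPolynomial.eval x (peel i A) = (linePoly x i A).coeff (psi i A).natDegree := by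
    rw [coeff_linePoly]; rfl
  have hy : MvPolynomial.eval y (peel i A) = (linePoly y i A).coeff (psi i A).natDegree := by
    rw [coeff_linePoly]; rfl
  rw [hx, hy, linePoly_congr hA (fun j hj hji => hxy j (by simp [hj, hji]))]

lemma indep_univ_const {A : MvPolynomial (Fin N) ℝ} (hA : A ≠ 0) (h : Indep Set.univ A) :
    ∀ x, MvPolynomial.eval x A ≠ 0 := by
  by_contra hc
  push_neg at hc
  obtain ⟨x₀, hx₀⟩ := hc
  apply hA
  apply MvPolynomial.funext (q := 0)
  intro y
  rw [h y x₀ (fun j hj => absurd (Set.mem_univ j) hj)]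
  simpa using hx₀

end RatAux

noncomputable section Sat

variable {N : ℕ} {U : Set (Fin N → ℝ)} {f : (Fin N → ℝ) → ℝ}

lemma infinite_of_infinite_diff_finite {S T : Set ℝ} (hS : S.Infinite) (hT : T.Finite) :
    (S \ T).Infinite := Set.Infinite.diff hS hT

lemma saturation (hreg : RegularOnAxisParallelIntervals N U f)
    (A B : MvPolynomial (Fin N) ℝ) (x : Fin N → ℝ) (i : Fin N) (I : Set ℝ)
    (hIo : IsOpen I) (hIc : I.OrdConnected)
    (hIU : ∀ t ∈ I, x + t • (Pi.single i 1 : Fin N → ℝ) ∈ U)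
    (h0 : (0:ℝ) ∈ I)
    (hBx : MvPolynomial.eval x B ≠ 0)
    (hinf : {t | t ∈ I ∧ MvPolynomial.eval (x + t • (Pi.single i 1 : Fin N → ℝ)) B ≠ 0 ∧
        f (x + t • (Pi.single i 1 : Fin N → ℝ)) =
          MvPolynomial.eval (x + t • (Pi.single i 1 : Fin N → ℝ)) A /
          MvPolynomial.eval (x + t • (Pi.single i 1 : Fin N → ℝ)) B}.Infinite) :
    f x = MvPolynomial.eval x A / MvPolynomial.eval x B := by
  obtain ⟨a, b, hb0, hab⟩ := hreg i x I hIo hIc hIU 0 h0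
  have hb0' : (0:ℝ) + x i = x i := by ring
  -- shifted line polynomials, in the parameter t
  set LA := (linePoly x i A).comp (Polynomial.X + Polynomial.C (x i)) with hLA
  set LB := (linePoly x i B).comp (Polynomial.X + Polynomial.C (x i)) with hLB
  have hLAe : ∀ t : ℝ, LA.eval t = MvPolynomial.eval (x + t • (Pi.single i 1 : Fin N → ℝ)) A := by
    intro t
    rw [hLA, Polynomial.eval_comp, eval_line]
    simp [add_comm]
  have hLBe : ∀ t : ℝ, LB.eval t = MvPolynomial.eval (x + t • (Pi.single i 1 : Fin N → ℝ)) B := by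
    intro t
    rw [hLB, Polynomial.eval_comp, eval_line]
    simp [add_comm]
  have hbne : b ≠ 0 := fun h => hb0 (by simp [h])
  set P := a * LB - b * LA with hP
  have hProots : {t | P.IsRoot t}.Infinite := by
    apply Set.Infinite.mono _ (infinite_of_infinite_diff_finite hinf (Polynomial.finite_setOf_isRoot hbne))
    rintro t ⟨⟨htI, htB, htf⟩, htb⟩
    simp only [Set.mem_setOf_eq] at htb
    have hbt : Polynomial.eval t b ≠ 0 := htb
    have hft := hab t htI hbt
    have : f (x + t • (Pi.single i 1 : Fin N → ℝ)) * b.eval t = a.eval t := by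
      rw [hft]; field_simp
    simp only [Set.mem_setOf_eq, Polynomial.IsRoot, hP]
    have hA' := hLAe t
    have hB' := hLBe t
    have hf2 : f (x + t • (Pi.single i 1 : Fin N → ℝ)) * MvPolynomial.eval (x + t • (Pi.single i 1 : Fin N → ℝ)) B = MvPolynomial.eval (x + t • (Pi.single i 1 : Fin N → ℝ)) A := by
      rw [htf]; field_simp
    simp only [Polynomial.eval_sub, Polynomial.eval_mul]
    rw [hA', hB', ← hf2, ← this]
    ring
  have hP0 : P = 0 := Polynomial.eq_zero_of_infinite_isRoot P hProots
  -- evaluate the identity at 0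
  have hkey : a.eval 0 * MvPolynomial.eval x B = b.eval 0 * MvPolynomial.eval x A := by
    have := congrArg (Polynomial.eval 0) hP0
    simp only [hP, Polynomial.eval_sub, Polynomial.eval_mul, Polynomial.eval_zero] at this
    have h1 : LA.eval 0 = MvPolynomial.eval x A := by
      rw [hLAe 0]; simp
    have h2 : LB.eval 0 = MvPolynomial.eval x B := by
      rw [hLBe 0]; simp
    rw [h1, h2] at this
    linarith [this]
  have hfx := hab 0 h0 hb0
  simp only [zero_smul, add_zero] at hfx
  rw [hfx, div_eq_div_iff hb0 hBx]
  linarith [hkey]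

end Sat

noncomputable section Ext

variable {N : ℕ} {U : Set (Fin N → ℝ)} {f : (Fin N → ℝ) → ℝ}

def rbox (lo hi : Fin N → ℝ) : Set (Fin N → ℝ) := {x | ∀ k, x k ∈ Set.Ioo (lo k) (hi k)}

lemma isOpen_rbox (lo hi : Fin N → ℝ) : IsOpen (rbox lo hi) := by
  have : rbox lo hi = Set.pi Set.univ (fun k => Set.Ioo (lo k) (hi k)) := by
    ext x; simp [rbox, Set.mem_pi]
  rw [this]
  exact isOpen_set_pi Set.finite_univ (fun a _ => isOpen_Ioo)

lemma finite_line_zeros {x : Fin N → ℝ} {i : Fin N} {B : MvPolynomial (Fin N) ℝ}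
    (h : linePoly x i B ≠ 0) :
    {t : ℝ | MvPolynomial.eval (x + t • (Pi.single i 1 : Fin N → ℝ)) B = 0}.Finite := by
  have : {t : ℝ | MvPolynomial.eval (x + t • (Pi.single i 1 : Fin N → ℝ)) B = 0}
      = (fun t : ℝ => x i + t) ⁻¹' {s : ℝ | (linePoly x i B).eval s = 0} := by
    ext t; simp [eval_line]
  rw [this]
  apply Set.Finite.preimage _ (Polynomial.finite_setOf_isRoot h)
  intro s _ t _ hst
  simpa using hst

lemma linePoly_ne_zero_of_eval {x : Fin N → ℝ} {i : Fin N} {B : MvPolynomial (Fin N) ℝ}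
    (h : MvPolynomial.eval x B ≠ 0) : linePoly x i B ≠ 0 := by
  intro h0
  apply h
  have := linePoly_eval x i (x i) B
  rw [h0] at this
  simpa using this.symm

lemma ext_lemma (hreg : RegularOnAxisParallelIntervals N U f)
    (A B : MvPolynomial (Fin N) ℝ) (lo hi lo' hi' : Fin N → ℝ)
    (hlo : ∀ k, lo k ≤ lo' k) (hhi : ∀ k, hi' k ≤ hi k) (hlt : ∀ k, lo' k < hi' k)
    (hBoxU : rbox lo hi ⊆ U) (D : MvPolynomial (Fin N) ℝ) (hD : D ≠ 0)
    (hgood : ∀ x ∈ rbox lo' hi', MvPolynomial.eval x B ≠ 0 → MvPolynomial.eval x D ≠ 0 →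
      f x = MvPolynomial.eval x A / MvPolynomial.eval x B) :
    ∀ x ∈ rbox lo hi, MvPolynomial.eval x B ≠ 0 →
      f x = MvPolynomial.eval x A / MvPolynomial.eval x B := by
  -- mixed boxes
  set mlo : ℕ → (Fin N → ℝ) := fun k j => if (j : ℕ) < k then lo j else lo' j with hmlo
  set mhi : ℕ → (Fin N → ℝ) := fun k j => if (j : ℕ) < k then hi j else hi' j with hmhi
  have claim : ∀ k : ℕ, k ≤ N → ∃ D' : MvPolynomial (Fin N) ℝ, D' ≠ 0 ∧
      Indep {j : Fin N | (j : ℕ) < k} D' ∧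
      ∀ x ∈ rbox (mlo k) (mhi k), MvPolynomial.eval x B ≠ 0 →
        MvPolynomial.eval x D' ≠ 0 → f x = MvPolynomial.eval x A / MvPolynomial.eval x B := by
    intro k
    induction k with
    | zero =>
      intro _
      refine ⟨D, hD, ?_, ?_⟩
      · intro x y hxy
        have : x = y := funext fun j => hxy j (by simp)
        rw [this]
      · intro x hx hB hD'
        apply hgood x _ hB hD'
        intro j
        have := hx j
        simpa [hmlo, hmhi] using this
    | succ k ih =>
      intro hk1
      have hkN : k < N := Nat.lt_of_succ_le hk1
      obtain ⟨D', hD'0, hD'ind, hD'good⟩ := ih (Nat.le_of_lt hkN)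
      set i : Fin N := ⟨k, hkN⟩ with hi_def
      refine ⟨peel i D', peel_ne_zero hD'0, ?_, ?_⟩
      · have hset : {j : Fin N | (j : ℕ) < k + 1} = insert i {j : Fin N | (j : ℕ) < k} := by
          ext j
          simp only [Set.mem_setOf_eq, Set.mem_insert_iff]
          constructor
          · intro hj
            rcases Nat.lt_succ_iff_lt_or_eq.mp hj with h | h
            · exact Or.inr h
            · exact Or.inl (Fin.ext h)
          · rintro (rfl | hj)
            · exact Nat.lt_succ_self k
            · exact Nat.lt_succ_of_lt hj
        rw [hset]
        exact indep_peel hD'ind i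
      · intro x hx hBx hpx
        -- x lies in box lo hi
        have hxbig : ∀ j, x j ∈ Set.Ioo (lo j) (hi j) := by
          intro j
          have := hx j
          by_cases hj : (j:ℕ) < k + 1
          · simpa [hmlo, hmhi, hj] using this
          · simp only [hmlo, hmhi, hj, if_false] at this
            exact ⟨lt_of_le_of_lt (hlo j) this.1, lt_of_lt_of_le this.2 (hhi j)⟩
        have hIU : ∀ t ∈ Set.Ioo (lo i - x i) (hi i - x i),
            x + t • (Pi.single i 1 : Fin N → ℝ) ∈ U := by
          intro t ht
          apply hBoxU
          intro j
          by_cases hj : j = i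
          · subst hj
            simp only [add_smul_single_eq_update, Function.update_self]
            constructor <;> [linarith [ht.1]; linarith [ht.2]]
          · rw [add_smul_single_eq_update, Function.update_apply, if_neg hj]
            exact hxbig j
        have h0I : (0:ℝ) ∈ Set.Ioo (lo i - x i) (hi i - x i) := by
          constructor <;> [linarith [(hxbig i).1]; linarith [(hxbig i).2]]
        apply saturation hreg A B x i _ isOpen_Ioo Set.ordConnected_Ioo hIU h0I hBx
        -- the good subset of parameters
        have hsub : (Set.Ioo (lo' i - x i) (hi' i - x i) \
            ({t : ℝ | MvPolynomial.eval (x + t • (Pi.single i 1 : Fin N → ℝ)) B = 0} ∪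
             {t : ℝ | MvPolynomial.eval (x + t • (Pi.single i 1 : Fin N → ℝ)) D' = 0})) ⊆
            {t | t ∈ Set.Ioo (lo i - x i) (hi i - x i) ∧
              MvPolynomial.eval (x + t • (Pi.single i 1 : Fin N → ℝ)) B ≠ 0 ∧
              f (x + t • (Pi.single i 1 : Fin N → ℝ)) =
                MvPolynomial.eval (x + t • (Pi.single i 1 : Fin N → ℝ)) A /
                MvPolynomial.eval (x + t • (Pi.single i 1 : Fin N → ℝ)) B} := by
          rintro t ⟨htI, htz⟩
          simp only [Set.mem_union, Set.mem_setOf_eq, not_or] at htz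
          have ht1 : t ∈ Set.Ioo (lo i - x i) (hi i - x i) := by
            constructor <;> [linarith [htI.1, hlo i]; linarith [htI.2, hhi i]]
          refine ⟨ht1, htz.1, ?_⟩
          apply hD'good _ _ htz.1 htz.2
          intro j
          by_cases hj : j = i
          · subst hj
            rw [add_smul_single_eq_update, Function.update_self]
            have : ¬ ((i:ℕ) < k) := by simp [hi_def]
            simp only [hmlo, hmhi, this, if_false]
            constructor <;> [linarith [htI.1]; linarith [htI.2]]
          · rw [add_smul_single_eq_update, Function.update_apply, if_neg hj]
            have hxj := hx j
            by_cases hjk : (j:ℕ) < k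
            · have : (j:ℕ) < k + 1 := Nat.lt_succ_of_lt hjk
              simp only [hmlo, hmhi, hjk, if_true] at hxj ⊢
              simpa [hmlo, hmhi, this] using hxj
            · have hjk1 : ¬ ((j:ℕ) < k + 1) := by
                intro hcon
                rcases Nat.lt_succ_iff_lt_or_eq.mp hcon with h | h
                · exact hjk h
                · exact hj (Fin.ext h)
              simp only [hmlo, hmhi, hjk, if_false]
              simpa [hmlo, hmhi, hjk1] using hxj
        apply Set.Infinite.mono hsub
        apply Set.Infinite.diff
        · exact Set.Ioo_infinite (by linarith [hlt i])
        · apply Set.Finite.union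
          · exact finite_line_zeros (linePoly_ne_zero_of_eval hBx)
          · exact finite_line_zeros (linePoly_ne_zero hpx)
  -- conclude with k = N
  obtain ⟨D', hD'0, hD'ind, hD'good⟩ := claim N le_rfl
  have huniv : {j : Fin N | (j : ℕ) < N} = Set.univ := by
    ext j; simp [j.isLt]
  rw [huniv] at hD'ind
  have hDall := indep_univ_const hD'0 hD'ind
  intro x hx hBx
  apply hD'good x _ hBx (hDall x)
  intro j
  have := hx j
  simpa [hmlo, hmhi, j.isLt] using this

end Ext

noncomputable section ZD

variable {N : ℕ}

def segPoly (c x : Fin N → ℝ) : MvPolynomial (Fin N) ℝ →ₐ[ℝ] Polynomial ℝ :=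
  MvPolynomial.aeval (fun j => Polynomial.C (c j) + Polynomial.C (x j - c j) * Polynomial.X)

lemma segPoly_eval (c x : Fin N → ℝ) (t : ℝ) (p : MvPolynomial (Fin N) ℝ) :
    (segPoly c x p).eval t = MvPolynomial.eval (fun j => c j + (x j - c j) * t) p := by
  have h : ((Polynomial.evalRingHom t).comp (segPoly c x).toRingHom)
      = (MvPolynomial.eval (fun j => c j + (x j - c j) * t) : MvPolynomial (Fin N) ℝ →+* ℝ) := by
    apply MvPolynomial.ringHom_ext
    · intro r; simp [segPoly]
    · intro j; simp [segPoly]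
  exact RingHom.congr_fun h p

lemma eq_zero_of_zero_on_ball {p : MvPolynomial (Fin N) ℝ} {c : Fin N → ℝ} {r : ℝ} (hr : 0 < r)
    (h : ∀ x ∈ Metric.ball c r, MvPolynomial.eval x p = 0) : p = 0 := by
  apply MvPolynomial.funext (q := 0)
  intro x
  simp only [map_zero]
  set M : ℝ := dist x c + 1 with hM
  have hM0 : 0 < M := by positivity
  have hseg : ∀ t ∈ Set.Ioo (-(r/M)) (r/M), (segPoly c x p).eval t = 0 := by
    intro t ht
    rw [segPoly_eval]
    apply h
    rw [Metric.mem_ball, dist_pi_lt_iff hr]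
    intro j
    rw [Real.dist_eq]
    have h1 : |c j + (x j - c j) * t - c j| = |x j - c j| * |t| := by
      rw [← abs_mul]; ring_nf
    rw [h1]
    have h2 : |x j - c j| ≤ dist x c := by
      rw [← Real.dist_eq]
      exact dist_le_pi_dist x c j
    have h3 : |t| < r / M := abs_lt.mpr ⟨ht.1, ht.2⟩
    calc |x j - c j| * |t| ≤ dist x c * |t| := by
          apply mul_le_mul_of_nonneg_right h2 (abs_nonneg t)
      _ ≤ M * |t| := by
          apply mul_le_mul_of_nonneg_right _ (abs_nonneg t)
          simp [hM]
      _ < M * (r / M) := by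
          exact (mul_lt_mul_iff_right₀ hM0).mpr h3
      _ = r := by field_simp
  have hzero : segPoly c x p = 0 := by
    apply Polynomial.eq_zero_of_infinite_isRoot
    apply Set.Infinite.mono _ (Set.Ioo_infinite (by { have := div_pos hr hM0; linarith } : -(r/M) < r/M))
    intro t ht
    exact hseg t ht
  have := segPoly_eval c x 1 p
  rw [hzero] at this
  simp only [Polynomial.eval_zero] at this
  have h4 : (fun j => c j + (x j - c j) * 1) = x := by
    funext j; ring
  rw [h4] at this
  exact this.symm

def ZDense (W : Set (Fin N → ℝ)) : Prop :=
  ∀ h : MvPolynomial (Fin N) ℝ, h ≠ 0 → ∃ y ∈ W, MvPolynomial.eval y h ≠ 0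

lemma exists_zdense {ι : Type} [Countable ι] {c : Fin N → ℝ} {r : ℝ} (hr : 0 < r)
    (W : ι → Set (Fin N → ℝ)) (hcov : Metric.ball c r ⊆ ⋃ i, W i) :
    ∃ i, ZDense (W i) := by
  by_contra hc
  push_neg at hc
  simp only [ZDense, not_forall, not_exists] at hc
  choose h hne hvan using hc
  have hopen : ∀ i, IsOpen {x : Fin N → ℝ | MvPolynomial.eval x (h i) ≠ 0} := by
    intro i
    have : {x : Fin N → ℝ | MvPolynomial.eval x (h i) ≠ 0}
        = (fun x => MvPolynomial.eval x (h i)) ⁻¹' ({0}ᶜ) := by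
      ext x; simp
    rw [this]
    exact (MvPolynomial.continuous_eval (h i)).isOpen_preimage _ (isOpen_compl_singleton)
  have hdense : ∀ i, Dense {x : Fin N → ℝ | MvPolynomial.eval x (h i) ≠ 0} := by
    intro i
    rw [dense_iff_inter_open]
    rintro V hV ⟨v, hv⟩
    by_contra hVempty
    rw [Set.not_nonempty_iff_eq_empty] at hVempty
    obtain ⟨ρ, hρ0, hball⟩ := Metric.isOpen_iff.mp hV v hv
    apply hne i
    apply eq_zero_of_zero_on_ball hρ0
    intro x hx
    by_contra hx0
    have : x ∈ V ∩ {x : Fin N → ℝ | MvPolynomial.eval x (h i) ≠ 0} := ⟨hball hx, hx0⟩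
    rw [hVempty] at this
    exact this
  have hdinter := dense_iInter_of_isOpen hopen hdense
  obtain ⟨y, hy1, hy2⟩ := hdinter.inter_open_nonempty (Metric.ball c r) Metric.isOpen_ball
    ⟨c, Metric.mem_ball_self hr⟩
  obtain ⟨i, hi⟩ := Set.mem_iUnion.mp (hcov hy1)
  have h2 := Set.mem_iInter.mp hy2 i
  exact hvan i y ⟨hi, h2⟩

end ZD


noncomputable section Slice

variable {N : ℕ}

def sub0 (s : ℝ) : MvPolynomial (Fin (N+1)) ℝ →ₐ[ℝ] MvPolynomial (Fin N) ℝ :=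
  MvPolynomial.aeval (Fin.cases (MvPolynomial.C s) MvPolynomial.X)

lemma sub0_eval (s : ℝ) (y : Fin N → ℝ) (A : MvPolynomial (Fin (N+1)) ℝ) :
    MvPolynomial.eval y (sub0 s A) = MvPolynomial.eval (Fin.cons s y) A := by
  have h : ((MvPolynomial.eval y : MvPolynomial (Fin N) ℝ →+* ℝ).comp (sub0 s).toRingHom)
      = (MvPolynomial.eval (Fin.cons s y) : MvPolynomial (Fin (N+1)) ℝ →+* ℝ) := by
    apply MvPolynomial.ringHom_ext
    · intro r; simp [sub0]
    · intro j
      refine Fin.cases ?_ ?_ j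
      · simp [sub0]
      · intro k; simp [sub0]
  exact RingHom.congr_fun h A

lemma cons_line (s : ℝ) (y : Fin N → ℝ) (t : ℝ) (i : Fin N) :
    Fin.cons s (y + t • (Pi.single i 1 : Fin N → ℝ))
      = Fin.cons s y + t • (Pi.single i.succ 1 : Fin (N+1) → ℝ) := by
  funext j
  refine Fin.cases ?_ ?_ j
  · simp [Pi.single_apply, (Fin.succ_ne_zero i).symm]
  · intro k
    simp only [Fin.cons_succ, Pi.add_apply, Pi.smul_apply, smul_eq_mul]
    rw [Pi.single_apply, Pi.single_apply]
    by_cases hk : k = i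
    · simp [hk]
    · have hk2 : ¬ (k.succ = i.succ) := fun h => hk (Fin.succ_injective N h)
      simp [hk, hk2]

lemma cons_vertical (s t : ℝ) (y : Fin N → ℝ) :
    Fin.cons (s + t) y = Fin.cons s y + t • (Pi.single (0 : Fin (N+1)) 1 : Fin (N+1) → ℝ) := by
  funext j
  refine Fin.cases ?_ ?_ j
  · simp
  · intro k
    simp [Pi.single_apply, Fin.succ_ne_zero]

lemma slice_hreg {U : Set (Fin (N+1) → ℝ)} {f : (Fin (N+1) → ℝ) → ℝ}
    (hreg : RegularOnAxisParallelIntervals (N+1) U f) (s : ℝ) :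
    RegularOnAxisParallelIntervals N {y | Fin.cons s y ∈ U} (fun y => f (Fin.cons s y)) := by
  intro i y I hIo hIc hIU t₀ ht₀
  obtain ⟨p, q, hq, hpq⟩ := hreg i.succ (Fin.cons s y) I hIo hIc
    (fun t ht => by
      have := hIU t ht
      rw [← cons_line]
      exact this) t₀ ht₀
  refine ⟨p, q, hq, ?_⟩
  intro t ht hqt
  have h2 := hpq t ht hqt
  show f (Fin.cons s (y + t • (Pi.single i 1 : Fin N → ℝ))) = _
  rw [cons_line]
  exact h2

lemma eval_cons_rename (s : ℝ) (y : Fin N → ℝ) (p : MvPolynomial (Fin N) ℝ) :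
    MvPolynomial.eval (Fin.cons s y) (MvPolynomial.rename Fin.succ p) = MvPolynomial.eval y p := by
  rw [MvPolynomial.eval_rename]
  congr 1

end Slice

noncomputable section Helpers

variable {N : ℕ}

lemma hreg_mono {U V : Set (Fin N → ℝ)} {f : (Fin N → ℝ) → ℝ} (hVU : V ⊆ U)
    (h : RegularOnAxisParallelIntervals N U f) : RegularOnAxisParallelIntervals N V f :=
  fun i x I hIo hIc hIU t₀ ht₀ => h i x I hIo hIc (fun t ht => hVU (hIU t ht)) t₀ ht₀

lemma rbox_convex (lo hi : Fin N → ℝ) : Convex ℝ (rbox lo hi) := by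
  have : rbox lo hi = Set.pi Set.univ (fun k => Set.Ioo (lo k) (hi k)) := by
    ext x; simp [rbox, Set.mem_pi]
  rw [this]
  exact convex_pi (fun k _ => convex_Ioo _ _)

variable {d : ℕ}

lemma natDegree_finsum_monomial_le (g : Fin (d+1) → ℝ) :
    (∑ l : Fin (d+1), Polynomial.monomial (l:ℕ) (g l)).natDegree ≤ d := by
  apply Polynomial.natDegree_sum_le_of_forall_le
  intro l _
  exact le_trans (Polynomial.natDegree_monomial_le (g l)) (Nat.lt_succ_iff.mp l.isLt)

lemma coeff_finsum_monomial (g : Fin (d+1) → ℝ) (l0 : Fin (d+1)) :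
    (∑ l : Fin (d+1), Polynomial.monomial (l:ℕ) (g l)).coeff (l0:ℕ) = g l0 := by
  rw [Polynomial.finset_sum_coeff]
  have h1 : ∀ l : Fin (d+1), (Polynomial.monomial (l:ℕ) (g l)).coeff (l0:ℕ)
      = if l = l0 then g l else 0 := by
    intro l
    rw [Polynomial.coeff_monomial]
    congr 1
    simp [Fin.val_inj]
  simp_rw [h1]
  simp

lemma eval_finsum_monomial (g : Fin (d+1) → ℝ) (s : ℝ) :
    (∑ l : Fin (d+1), Polynomial.monomial (l:ℕ) (g l)).eval s = ∑ l : Fin (d+1), g l * s^(l:ℕ) := by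
  rw [Polynomial.eval_finset_sum]
  simp [Polynomial.eval_monomial]

lemma natDegree_finsum_monomialK {K : Type*} [Field K] (g : Fin (d+1) → K) :
    (∑ l : Fin (d+1), Polynomial.monomial (l:ℕ) (g l)).natDegree ≤ d := by
  apply Polynomial.natDegree_sum_le_of_forall_le
  intro l _
  exact le_trans (Polynomial.natDegree_monomial_le (g l)) (Nat.lt_succ_iff.mp l.isLt)

lemma coeff_finsum_monomialK {K : Type*} [Field K] (g : Fin (d+1) → K) (l0 : Fin (d+1)) :
    (∑ l : Fin (d+1), Polynomial.monomial (l:ℕ) (g l)).coeff (l0:ℕ) = g l0 := by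
  rw [Polynomial.finset_sum_coeff]
  have h1 : ∀ l : Fin (d+1), (Polynomial.monomial (l:ℕ) (g l)).coeff (l0:ℕ)
      = if l = l0 then g l else 0 := by
    intro l
    rw [Polynomial.coeff_monomial]
    congr 1
    simp [Fin.val_inj]
  simp_rw [h1]
  simp

lemma eval_finsum_monomialK {K : Type*} [Field K] (g : Fin (d+1) → K) (s : K) :
    (∑ l : Fin (d+1), Polynomial.monomial (l:ℕ) (g l)).eval s = ∑ l : Fin (d+1), g l * s^(l:ℕ) := by
  rw [Polynomial.eval_finset_sum]
  simp [Polynomial.eval_monomial]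

lemma sub0_rename (s : ℝ) (p : MvPolynomial (Fin N) ℝ) :
    sub0 s (MvPolynomial.rename Fin.succ p) = p := by
  apply MvPolynomial.funext
  intro y
  rw [sub0_eval, eval_cons_rename]

lemma sub0_X0 (s : ℝ) : sub0 (N := N) s (MvPolynomial.X 0) = MvPolynomial.C s := by
  apply MvPolynomial.funext
  intro y
  rw [sub0_eval]
  simp

lemma sub0_structured (s : ℝ) (γ : Fin (d+1) → MvPolynomial (Fin N) ℝ) :
    sub0 s (∑ l : Fin (d+1), MvPolynomial.rename Fin.succ (γ l) * (MvPolynomial.X 0)^(l:ℕ))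
      = ∑ l : Fin (d+1), γ l * MvPolynomial.C (s^(l:ℕ)) := by
  rw [map_sum]
  congr 1
  funext l
  rw [map_mul, map_pow, sub0_rename, sub0_X0, ← map_pow]

lemma eval_cons_structured (s : ℝ) (y : Fin N → ℝ) (γ : Fin (d+1) → MvPolynomial (Fin N) ℝ) :
    MvPolynomial.eval (Fin.cons s y)
        (∑ l : Fin (d+1), MvPolynomial.rename Fin.succ (γ l) * (MvPolynomial.X 0)^(l:ℕ))
      = (∑ l : Fin (d+1), Polynomial.monomial (l:ℕ) (MvPolynomial.eval y (γ l))).eval s := by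
  rw [← sub0_eval, sub0_structured, map_sum, eval_finsum_monomial]
  congr 1
  funext l
  rw [map_mul]
  simp

end Helpers

noncomputable section Main
set_option maxHeartbeats 2000000

theorem main_aux : ∀ n : ℕ, ∀ U : Set (Fin n → ℝ), IsOpen U → U.Nonempty → IsConnected U →
    ∀ f : (Fin n → ℝ) → ℝ, RegularOnAxisParallelIntervals n U f →
    ∃ p q : MvPolynomial (Fin n) ℝ, q ≠ 0 ∧
      ∀ x ∈ U, MvPolynomial.eval x q ≠ 0 → f x = MvPolynomial.eval x p / MvPolynomial.eval x q := by
  intro n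
  induction n with
  | zero =>
    intro U hU hne hconn f hreg
    obtain ⟨x₀, hx₀⟩ := hne
    refine ⟨MvPolynomial.C (f x₀), 1, one_ne_zero, ?_⟩
    intro x hx _
    have hxx : x = x₀ := funext (fun j => j.elim0)
    subst hxx
    simp
  | succ N IH =>
    intro U hU hne hconn f hreg
    obtain ⟨x₀, hx₀U⟩ := hne
    obtain ⟨r, hr0, hball⟩ := Metric.isOpen_iff.mp hU x₀ hx₀U
    set lo : Fin (N+1) → ℝ := fun j => x₀ j - r/2 with hlo_def
    set hi : Fin (N+1) → ℝ := fun j => x₀ j + r/2 with hhi_def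
    have hlohi : ∀ j, lo j < hi j := fun j => by simp [hlo_def, hhi_def]; linarith
    have hboxU : rbox lo hi ⊆ U := by
      intro z hz
      apply hball
      rw [Metric.mem_ball, dist_pi_lt_iff hr0]
      intro j
      rw [Real.dist_eq, abs_lt]
      have := hz j
      simp only [hlo_def, hhi_def, Set.mem_Ioo] at this
      constructor <;> linarith [this.1, this.2]
    set J : Set ℝ := Set.Ioo (lo 0) (hi 0) with hJ_def
    set blo : Fin N → ℝ := fun k => lo k.succ with hblo_def
    set bhi : Fin N → ℝ := fun k => hi k.succ with hbhi_def
    set Bbox : Set (Fin N → ℝ) := rbox blo bhi with hBbox_def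
    have hmem : ∀ (s : ℝ) (y : Fin N → ℝ), Fin.cons s y ∈ rbox lo hi ↔ s ∈ J ∧ y ∈ Bbox := by
      intro s y
      constructor
      · intro h
        refine ⟨by simpa [hJ_def] using h 0, fun k => by simpa [hblo_def, hbhi_def] using h k.succ⟩
      · rintro ⟨hs, hy⟩ j
        refine Fin.cases ?_ ?_ j
        · simpa [hJ_def] using hs
        · intro k; simpa [hblo_def, hbhi_def] using hy k
    have hconsU : ∀ s ∈ J, ∀ y ∈ Bbox, Fin.cons s y ∈ U :=
      fun s hs y hy => hboxU ((hmem s y).mpr ⟨hs, hy⟩)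
    have hBboxne : Bbox.Nonempty := by
      refine ⟨fun k => x₀ k.succ, fun k => ?_⟩
      simp only [hblo_def, hbhi_def, hlo_def, hhi_def, Set.mem_Ioo]
      constructor <;> linarith
    have hBboxconn : IsConnected Bbox :=
      ⟨hBboxne, (rbox_convex blo bhi).isPreconnected⟩
    -- slice representations from the induction hypothesis
    have slice_ex : ∀ s : ℝ, ∃ PQ : MvPolynomial (Fin N) ℝ × MvPolynomial (Fin N) ℝ,
        PQ.2 ≠ 0 ∧ (s ∈ J → ∀ y ∈ Bbox, MvPolynomial.eval y PQ.2 ≠ 0 →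
          f (Fin.cons s y) = MvPolynomial.eval y PQ.1 / MvPolynomial.eval y PQ.2) := by
      intro s
      by_cases hs : s ∈ J
      · have hsub : Bbox ⊆ {y : Fin N → ℝ | Fin.cons s y ∈ U} :=
          fun y hy => hconsU s hs y hy
        obtain ⟨p, q, hq, hrep⟩ := IH Bbox (isOpen_rbox _ _) hBboxne hBboxconn
          (fun y => f (Fin.cons s y)) (hreg_mono hsub (slice_hreg hreg s))
        exact ⟨(p, q), hq, fun _ => hrep⟩
      · exact ⟨(0, 1), one_ne_zero, fun hs' => absurd hs' hs⟩
    choose PQ hQs hPQ using slice_ex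
    -- vertical lines
    have vert : ∀ y ∈ Bbox, ∃ a b : Polynomial ℝ, b ≠ 0 ∧
        ∀ t ∈ J, b.eval t ≠ 0 → f (Fin.cons t y) = a.eval t / b.eval t := by
      intro y hy
      have hIU : ∀ t ∈ J, (Fin.cons 0 y : Fin (N+1) → ℝ)
          + t • (Pi.single (0 : Fin (N+1)) 1 : Fin (N+1) → ℝ) ∈ U := by
        intro t ht
        rw [← cons_vertical, zero_add]
        exact hconsU t ht y hy
      have hx00 : x₀ 0 ∈ J := by
        simp only [hJ_def, hlo_def, hhi_def, Set.mem_Ioo]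
        constructor <;> linarith
      obtain ⟨a, b, hb, hab⟩ := hreg 0 (Fin.cons 0 y) J isOpen_Ioo Set.ordConnected_Ioo hIU
        (x₀ 0) hx00
      refine ⟨a, b, fun h => hb (by simp [h]), ?_⟩
      intro t ht hbt
      have := hab t ht hbt
      rwa [← cons_vertical, zero_add] at this
    -- the pool of sample heights
    set τ : ℕ → ℝ := fun m => x₀ 0 + (r/2) / (m+2) with hτ_def
    have hτJ : ∀ m, τ m ∈ J := by
      intro m
      have hm2 : (0:ℝ) < (m:ℝ) + 2 := by positivity
      have h1 : (0:ℝ) < (r/2) / ((m:ℝ)+2) := by positivity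
      have h2 : (r/2) / ((m:ℝ)+2) < r/2 := by
        rw [div_lt_iff₀ hm2]
        nlinarith [hr0]
      simp only [hτ_def, hJ_def, hlo_def, hhi_def, Set.mem_Ioo]
      constructor <;> [linarith; linarith]
    have hτinj : Function.Injective τ := by
      intro m m' h
      simp only [hτ_def, add_right_inj] at h
      have hm2 : (0:ℝ) < (m:ℝ) + 2 := by positivity
      have hm2' : (0:ℝ) < (m':ℝ) + 2 := by positivity
      have hr2 : (0:ℝ) < r/2 := by linarith
      rw [div_eq_div_iff (ne_of_gt hm2) (ne_of_gt hm2')] at h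
      have h2 : (m:ℝ) + 2 = (m':ℝ) + 2 := by
        have := mul_left_cancel₀ (ne_of_gt hr2) h
        linarith
      have : (m:ℝ) = (m':ℝ) := by linarith
      exact_mod_cast this
    -- degree classes
    set W : ℕ × Finset ℕ → Set (Fin N → ℝ) := fun ds =>
      {y | y ∈ Bbox ∧ ds.2.card = 2*ds.1+1 ∧ ∃ a b : Polynomial ℝ,
        a.natDegree ≤ ds.1 ∧ b.natDegree ≤ ds.1 ∧ (∀ m ∈ ds.2, b.eval (τ m) ≠ 0) ∧
        ∀ t ∈ J, b.eval t ≠ 0 → f (Fin.cons t y) = a.eval t / b.eval t} with hW_def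
    have hcov : Metric.ball (fun k => x₀ k.succ) (r/2) ⊆ ⋃ ds, W ds := by
      intro y hy
      have hyB : y ∈ Bbox := by
        intro k
        rw [Metric.mem_ball, dist_pi_lt_iff (by linarith : (0:ℝ) < r/2)] at hy
        have := hy k
        rw [Real.dist_eq, abs_lt] at this
        simp only [hblo_def, hbhi_def, hlo_def, hhi_def, Set.mem_Ioo]
        constructor <;> linarith [this.1, this.2]
      obtain ⟨a, b, hb, hab⟩ := vert y hyB
      set d : ℕ := max a.natDegree b.natDegree with hd_def
      have hgood : {m : ℕ | b.eval (τ m) ≠ 0}.Infinite := by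
        have hbad : {m : ℕ | b.eval (τ m) = 0}.Finite := by
          have : {m : ℕ | b.eval (τ m) = 0} ⊆ τ ⁻¹' {t | b.IsRoot t} := fun m hm => hm
          exact Set.Finite.subset (Set.Finite.preimage (hτinj.injOn) (Polynomial.finite_setOf_isRoot hb)) this
        have := Set.infinite_univ (α := ℕ)
        have hun : {m : ℕ | b.eval (τ m) ≠ 0} ∪ {m : ℕ | b.eval (τ m) = 0} = Set.univ := by
          ext m; by_cases h : b.eval (τ m) = 0 <;> simp [h]
        by_contra hfin
        rw [Set.not_infinite] at hfin
        have : (Set.univ : Set ℕ).Finite := by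
          rw [← hun]; exact hfin.union hbad
        exact Set.infinite_univ this
      obtain ⟨S, hS_sub, hS_card⟩ := hgood.exists_subset_card_eq (2*d+1)
      apply Set.mem_iUnion.mpr
      exact ⟨(d, S), hyB, hS_card, a, b, le_max_left _ _, le_max_right _ _,
        (fun m hm => hS_sub hm), hab⟩
    obtain ⟨dS, hWzd⟩ := exists_zdense (by linarith : (0:ℝ) < r/2) W hcov
    obtain ⟨ywit, hywit, -⟩ := hWzd 1 one_ne_zero
    set d : ℕ := dS.1 with hd_def
    set S : Finset ℕ := dS.2 with hS_def
    have hScard : S.card = 2*d+1 := hywit.2.1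
    -- enumeration of S
    set em : Fin (2*d+1) → ℕ := fun rr => ((S.orderIsoOfFin hScard) rr : ℕ) with hem_def
    have hem_inj : Function.Injective em :=
      fun a b h => (S.orderIsoOfFin hScard).injective (Subtype.val_injective h)
    have hem_mem : ∀ rr, em rr ∈ S := fun rr => ((S.orderIsoOfFin hScard) rr).2
    -- the fraction field
    set K := FractionRing (MvPolynomial (Fin N) ℝ) with hK_def
    set ι0 : ℝ →+* K := (algebraMap (MvPolynomial (Fin N) ℝ) K).comp
      (MvPolynomial.C : ℝ →+* MvPolynomial (Fin N) ℝ) with hι0_def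
    have halg_inj : Function.Injective (algebraMap (MvPolynomial (Fin N) ℝ) K) :=
      IsFractionRing.injective _ _
    have halgQ_ne : ∀ s : ℝ, algebraMap (MvPolynomial (Fin N) ℝ) K (PQ s).2 ≠ 0 := by
      intro s
      rw [map_ne_zero_iff _ halg_inj]
      exact hQs s
    set G : ℕ → K := fun m => algebraMap (MvPolynomial (Fin N) ℝ) K (PQ (τ m)).1
      / algebraMap (MvPolynomial (Fin N) ℝ) K (PQ (τ m)).2 with hG_def
    set M : Matrix (Fin (2*d+1)) (Fin (d+1) ⊕ Fin (d+1)) K := fun rr c =>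
      Sum.elim (fun l : Fin (d+1) => ι0 ((τ (em rr))^(l:ℕ)))
               (fun l : Fin (d+1) => - G (em rr) * ι0 ((τ (em rr))^(l:ℕ))) c with hM_def
    have hker : ∃ v : (Fin (d+1) ⊕ Fin (d+1)) → K, v ≠ 0 ∧ M.mulVec v = 0 := by
      by_contra hc
      push_neg at hc
      have hinj : Function.Injective (M.mulVecLin) := by
        rw [← LinearMap.ker_eq_bot, Submodule.eq_bot_iff]
        intro v hv
        by_contra hv0
        exact (hc v hv0) (by simpa using hv)
      have := LinearMap.finrank_le_finrank_of_injective hinj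
      rw [Module.finrank_pi, Module.finrank_pi] at this
      simp only [Fintype.card_sum, Fintype.card_fin] at this
      omega
    obtain ⟨v, hv0, hvker⟩ := hker
    have hrelK : ∀ rr : Fin (2*d+1),
        (∑ l : Fin (d+1), ι0 ((τ (em rr))^(l:ℕ)) * v (Sum.inl l))
          = G (em rr) * (∑ l : Fin (d+1), ι0 ((τ (em rr))^(l:ℕ)) * v (Sum.inr l)) := by
      intro rr
      have h0 := congrFun hvker rr
      simp only [Matrix.mulVec, dotProduct, Pi.zero_apply] at h0
      rw [Fintype.sum_sum_type] at h0
      simp only [hM_def, Sum.elim_inl, Sum.elim_inr] at h0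
      have h1 : ∑ l : Fin (d+1), (- G (em rr) * ι0 ((τ (em rr))^(l:ℕ))) * v (Sum.inr l)
          = - (G (em rr) * ∑ l : Fin (d+1), ι0 ((τ (em rr))^(l:ℕ)) * v (Sum.inr l)) := by
        rw [Finset.mul_sum, ← Finset.sum_neg_distrib]
        congr 1
        funext l
        ring
      rw [h1] at h0
      linear_combination h0
    -- common denominators
    obtain ⟨δ, hδint⟩ := IsLocalization.exist_integer_multiples
      (nonZeroDivisors (MvPolynomial (Fin N) ℝ)) Finset.univ v
    have hnum_ex : ∀ c, ∃ a : MvPolynomial (Fin N) ℝ,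
        algebraMap (MvPolynomial (Fin N) ℝ) K a = (δ : MvPolynomial (Fin N) ℝ) • v c :=
      fun c => hδint c (Finset.mem_univ c)
    choose num hnum using hnum_ex
    set α : Fin (d+1) → MvPolynomial (Fin N) ℝ := fun l => num (Sum.inl l) with hα_def
    set β : Fin (d+1) → MvPolynomial (Fin N) ℝ := fun l => num (Sum.inr l) with hβ_def
    have hδ0 : algebraMap (MvPolynomial (Fin N) ℝ) K (δ : MvPolynomial (Fin N) ℝ) ≠ 0 := by
      rw [map_ne_zero_iff _ halg_inj]
      exact nonZeroDivisors.ne_zero δ.2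
    set AS : ℕ → MvPolynomial (Fin N) ℝ := fun m =>
      ∑ l : Fin (d+1), α l * MvPolynomial.C ((τ m)^(l:ℕ)) with hAS_def
    set BS : ℕ → MvPolynomial (Fin N) ℝ := fun m =>
      ∑ l : Fin (d+1), β l * MvPolynomial.C ((τ m)^(l:ℕ)) with hBS_def
    have halgA : ∀ m : ℕ, algebraMap (MvPolynomial (Fin N) ℝ) K (AS m)
        = algebraMap (MvPolynomial (Fin N) ℝ) K (δ : MvPolynomial (Fin N) ℝ)
          * (∑ l : Fin (d+1), ι0 ((τ m)^(l:ℕ)) * v (Sum.inl l)) := by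
      intro m
      rw [hAS_def, map_sum, Finset.mul_sum]
      congr 1
      funext l
      rw [map_mul, hnum (Sum.inl l), Algebra.smul_def]
      simp only [hι0_def, RingHom.coe_comp, Function.comp_apply]
      ring
    have halgB : ∀ m : ℕ, algebraMap (MvPolynomial (Fin N) ℝ) K (BS m)
        = algebraMap (MvPolynomial (Fin N) ℝ) K (δ : MvPolynomial (Fin N) ℝ)
          * (∑ l : Fin (d+1), ι0 ((τ m)^(l:ℕ)) * v (Sum.inr l)) := by
      intro m
      rw [hBS_def, map_sum, Finset.mul_sum]
      congr 1
      funext l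
      rw [map_mul, hnum (Sum.inr l), Algebra.smul_def]
      simp only [hι0_def, RingHom.coe_comp, Function.comp_apply]
      ring
    have hrel : ∀ rr : Fin (2*d+1),
        AS (em rr) * (PQ (τ (em rr))).2 = (PQ (τ (em rr))).1 * BS (em rr) := by
      intro rr
      apply halg_inj
      rw [map_mul, map_mul, halgA, halgB]
      have hK := hrelK rr
      rw [hG_def] at hK
      rw [div_mul_eq_mul_div, eq_div_iff (halgQ_ne (τ (em rr)))] at hK
      calc algebraMap (MvPolynomial (Fin N) ℝ) K (δ : MvPolynomial (Fin N) ℝ)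
          * (∑ l : Fin (d+1), ι0 ((τ (em rr))^(l:ℕ)) * v (Sum.inl l))
          * algebraMap (MvPolynomial (Fin N) ℝ) K (PQ (τ (em rr))).2
          = algebraMap (MvPolynomial (Fin N) ℝ) K (δ : MvPolynomial (Fin N) ℝ)
          * ((∑ l : Fin (d+1), ι0 ((τ (em rr))^(l:ℕ)) * v (Sum.inl l))
            * algebraMap (MvPolynomial (Fin N) ℝ) K (PQ (τ (em rr))).2) := by ring
        _ = algebraMap (MvPolynomial (Fin N) ℝ) K (δ : MvPolynomial (Fin N) ℝ)
          * (algebraMap (MvPolynomial (Fin N) ℝ) K (PQ (τ (em rr))).1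
            * (∑ l : Fin (d+1), ι0 ((τ (em rr))^(l:ℕ)) * v (Sum.inr l))) := by rw [hK]
        _ = algebraMap (MvPolynomial (Fin N) ℝ) K (PQ (τ (em rr))).1
          * (algebraMap (MvPolynomial (Fin N) ℝ) K (δ : MvPolynomial (Fin N) ℝ)
            * (∑ l : Fin (d+1), ι0 ((τ (em rr))^(l:ℕ)) * v (Sum.inr l))) := by ring
    -- some β is nonzero
    have hβne : ∃ l, β l ≠ 0 := by
      by_contra hcon
      push_neg at hcon
      have hvinr : ∀ l, v (Sum.inr l) = 0 := by
        intro l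
        have h1 := hnum (Sum.inr l)
        rw [show num (Sum.inr l) = β l from rfl, hcon l, map_zero] at h1
        rw [Algebra.smul_def] at h1
        rcases mul_eq_zero.mp h1.symm with h | h
        · exact absurd h hδ0
        · exact h
      have hι0_inj : Function.Injective ι0 := by
        rw [hι0_def]
        exact halg_inj.comp (MvPolynomial.C_injective _ _)
      set PA : Polynomial K := ∑ l : Fin (d+1), Polynomial.monomial (l:ℕ) (v (Sum.inl l))
        with hPA_def
      have hPA0 : PA = 0 := by
        apply Polynomial.eq_zero_of_natDegree_lt_card_of_eval_eq_zero PA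
          (f := fun rr : Fin (2*d+1) => ι0 (τ (em rr)))
          (hι0_inj.comp (hτinj.comp hem_inj))
        · intro rr
          rw [hPA_def, eval_finsum_monomialK]
          have h2 := hrelK rr
          simp only [hvinr, mul_zero, Finset.sum_const_zero] at h2
          rw [← h2]
          congr 1
          funext l
          rw [map_pow]
          ring
        · have h3 : PA.natDegree ≤ d := natDegree_finsum_monomialK _
          rw [Fintype.card_fin]
          omega
      apply hv0
      funext c
      rcases c with l | l
      · have := coeff_finsum_monomialK (fun l : Fin (d+1) => v (Sum.inl l)) l
        rw [← hPA_def, hPA0] at this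
        simpa using this.symm
      · simp [hvinr l]
    obtain ⟨lstar, hlstar⟩ := hβne
    -- ambient candidate numerator and denominator
    set A : MvPolynomial (Fin (N+1)) ℝ :=
      ∑ l : Fin (d+1), MvPolynomial.rename Fin.succ (α l) * (MvPolynomial.X 0)^(l:ℕ) with hA_def
    set B : MvPolynomial (Fin (N+1)) ℝ :=
      ∑ l : Fin (d+1), MvPolynomial.rename Fin.succ (β l) * (MvPolynomial.X 0)^(l:ℕ) with hB_def
    set Ay : (Fin N → ℝ) → Polynomial ℝ := fun y =>
      ∑ l : Fin (d+1), Polynomial.monomial (l:ℕ) (MvPolynomial.eval y (α l)) with hAy_def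
    set By : (Fin N → ℝ) → Polynomial ℝ := fun y =>
      ∑ l : Fin (d+1), Polynomial.monomial (l:ℕ) (MvPolynomial.eval y (β l)) with hBy_def
    have hevalA : ∀ (s : ℝ) (y : Fin N → ℝ),
        MvPolynomial.eval (Fin.cons s y) A = (Ay y).eval s := by
      intro s y
      rw [hA_def, hAy_def]
      exact eval_cons_structured s y α
    have hevalB : ∀ (s : ℝ) (y : Fin N → ℝ),
        MvPolynomial.eval (Fin.cons s y) B = (By y).eval s := by
      intro s y
      rw [hB_def, hBy_def]
      exact eval_cons_structured s y β
    have hASy : ∀ (m : ℕ) (y : Fin N → ℝ),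
        MvPolynomial.eval y (AS m) = (Ay y).eval (τ m) := by
      intro m y
      rw [hAS_def, map_sum, hAy_def, eval_finsum_monomial]
      congr 1
      funext l
      rw [map_mul, MvPolynomial.eval_C]
    have hBSy : ∀ (m : ℕ) (y : Fin N → ℝ),
        MvPolynomial.eval y (BS m) = (By y).eval (τ m) := by
      intro m y
      rw [hBS_def, map_sum, hBy_def, eval_finsum_monomial]
      congr 1
      funext l
      rw [map_mul, MvPolynomial.eval_C]
    have hBne : B ≠ 0 := by
      have h1 : ∃ y, MvPolynomial.eval y (β lstar) ≠ 0 := by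
        by_contra hcon
        push_neg at hcon
        exact hlstar (MvPolynomial.funext (q := 0) (fun y => by simpa using hcon y))
      obtain ⟨y1, hy1⟩ := h1
      have hBy1 : By y1 ≠ 0 := by
        intro h
        apply hy1
        have hco : (By y1).coeff (lstar:ℕ) = MvPolynomial.eval y1 (β lstar) :=
          coeff_finsum_monomial _ lstar
        rw [h] at hco
        simpa using hco.symm
      have h2 : ∃ s : ℝ, (By y1).eval s ≠ 0 := by
        by_contra hcon
        push_neg at hcon
        exact hBy1 (Polynomial.funext (fun s => by simpa using hcon s))
      obtain ⟨s1, hs1⟩ := h2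
      intro hB0
      apply hs1
      rw [← hevalB s1 y1, hB0]
      simp
    set D0 : MvPolynomial (Fin N) ℝ := ∏ m ∈ S, (PQ (τ m)).2 with hD0_def
    have hD0ne : D0 ≠ 0 := Finset.prod_ne_zero_iff.mpr (fun m _ => hQs _)
    -- the fundamental comparison on the distinguished class
    have hDelta : ∀ y ∈ W dS, (∀ m ∈ S, MvPolynomial.eval y (PQ (τ m)).2 ≠ 0) →
        ∃ a b : Polynomial ℝ, b ≠ 0 ∧ b.natDegree ≤ d ∧
          (∀ t ∈ J, b.eval t ≠ 0 → f (Fin.cons t y) = a.eval t / b.eval t) ∧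
          (Ay y) * b = a * (By y) := by
      intro y hyW hQy
      obtain ⟨hyB, -, a, b, hda, hdb, hbS, hrepy⟩ := hyW
      have hSne : S.Nonempty := Finset.card_pos.mp (by omega)
      obtain ⟨m0, hm0⟩ := hSne
      have hbne : b ≠ 0 := fun h => hbS m0 hm0 (by simp [h])
      refine ⟨a, b, hbne, hdb, hrepy, ?_⟩
      have hΔ0 : Ay y * b - a * By y = 0 := by
        apply Polynomial.eq_zero_of_natDegree_lt_card_of_eval_eq_zero _
          (f := fun rr : Fin (2*d+1) => τ (em rr)) (hτinj.comp hem_inj)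
        · intro rr
          have hbm : b.eval (τ (em rr)) ≠ 0 := hbS (em rr) (hem_mem rr)
          have hfm : f (Fin.cons (τ (em rr)) y) = a.eval (τ (em rr)) / b.eval (τ (em rr)) :=
            hrepy (τ (em rr)) (hτJ (em rr)) hbm
          have hQm : MvPolynomial.eval y (PQ (τ (em rr))).2 ≠ 0 := hQy (em rr) (hem_mem rr)
          have hfm2 : f (Fin.cons (τ (em rr)) y)
              = MvPolynomial.eval y (PQ (τ (em rr))).1 / MvPolynomial.eval y (PQ (τ (em rr))).2 :=
            hPQ (τ (em rr)) (hτJ (em rr)) y hyB hQm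
          have hrely := congrArg (MvPolynomial.eval y) (hrel rr)
          rw [map_mul, map_mul, hASy, hBSy] at hrely
          have hPy : MvPolynomial.eval y (PQ (τ (em rr))).1
              = f (Fin.cons (τ (em rr)) y) * MvPolynomial.eval y (PQ (τ (em rr))).2 := by
            rw [hfm2]; field_simp
          have hay : a.eval (τ (em rr)) = f (Fin.cons (τ (em rr)) y) * b.eval (τ (em rr)) := by
            rw [hfm]; field_simp
          have h5 : (Ay y).eval (τ (em rr)) * MvPolynomial.eval y (PQ (τ (em rr))).2
              = (f (Fin.cons (τ (em rr)) y) * (By y).eval (τ (em rr)))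
                * MvPolynomial.eval y (PQ (τ (em rr))).2 := by
            rw [hrely, hPy]; ring
          have hAyτ : (Ay y).eval (τ (em rr))
              = f (Fin.cons (τ (em rr)) y) * (By y).eval (τ (em rr)) :=
            mul_right_cancel₀ hQm h5
          simp only [Polynomial.eval_sub, Polynomial.eval_mul]
          rw [hAyτ, hay]
          ring
        · rw [Fintype.card_fin]
          have h8 : (Ay y).natDegree ≤ d := natDegree_finsum_monomial_le _
          have h9 : (By y).natDegree ≤ d := natDegree_finsum_monomial_le _
          have h6 : (Ay y * b).natDegree ≤ 2*d := by
            apply le_trans (Polynomial.natDegree_mul_le)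
            omega
          have h7 : (a * By y).natDegree ≤ 2*d := by
            apply le_trans (Polynomial.natDegree_mul_le)
            omega
          have := Polynomial.natDegree_sub_le (Ay y * b) (a * By y)
          omega
      exact sub_eq_zero.mp hΔ0
    -- good slices
    set GoodS : Set ℝ := {s | s ∈ J ∧ ∀ y ∈ Bbox, MvPolynomial.eval (Fin.cons s y) B ≠ 0 →
      f (Fin.cons s y) = MvPolynomial.eval (Fin.cons s y) A / MvPolynomial.eval (Fin.cons s y) B}
      with hGoodS_def
    have hGoodDeriv : ∀ s ∈ J, sub0 s B ≠ 0 →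
        (sub0 s A) * (PQ s).2 = (PQ s).1 * (sub0 s B) → s ∈ GoodS := by
      intro s hsJ hBs0 hident
      refine ⟨hsJ, ?_⟩
      have hsub : Bbox ⊆ {y : Fin N → ℝ | Fin.cons s y ∈ U} := fun y hy => hconsU s hsJ y hy
      have hgood' : ∀ y ∈ rbox blo bhi, MvPolynomial.eval y (sub0 s B) ≠ 0 →
          MvPolynomial.eval y (PQ s).2 ≠ 0 →
          (fun y => f (Fin.cons s y)) y = MvPolynomial.eval y (sub0 s A) / MvPolynomial.eval y (sub0 s B) := by
        intro y hy hBy hQy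
        have hf2 := hPQ s hsJ y hy hQy
        have hidy := congrArg (MvPolynomial.eval y) hident
        rw [map_mul, map_mul] at hidy
        show f (Fin.cons s y) = _
        rw [hf2, div_eq_div_iff hQy hBy]
        linarith [hidy]
      have hext := ext_lemma (f := fun y => f (Fin.cons s y))
        (hreg_mono hsub (slice_hreg hreg s)) (sub0 s A) (sub0 s B)
        blo bhi blo bhi (fun k => le_refl _) (fun k => le_refl _) (fun k => hlohi k.succ)
        (fun y hy => hy) (PQ s).2 (hQs s) hgood'
      intro y hy hBy
      have := hext y hy (by rwa [sub0_eval])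
      rwa [sub0_eval, sub0_eval] at this
    -- finitely many bad heights
    obtain ⟨ystar, hystar⟩ : ∃ y, MvPolynomial.eval y (β lstar) ≠ 0 := by
      by_contra hcon
      push_neg at hcon
      exact hlstar (MvPolynomial.funext (q := 0) (fun y => by simpa using hcon y))
    have hqstar_ne : By ystar ≠ 0 := by
      intro h
      apply hystar
      have hco : (By ystar).coeff (lstar:ℕ) = MvPolynomial.eval ystar (β lstar) :=
        coeff_finsum_monomial _ lstar
      rw [h] at hco
      simpa using hco.symm
    have hF0fin : {s : ℝ | sub0 s B = 0}.Finite := by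
      apply Set.Finite.subset (Polynomial.finite_setOf_isRoot hqstar_ne)
      intro s hs
      have h1 := sub0_eval s ystar B
      rw [hs] at h1
      simp only [map_zero] at h1
      have h2 := hevalB s ystar
      show (By ystar).eval s = 0
      rw [← h2, ← h1]
    set BadS : Set ℝ := {s | s ∈ J ∧ sub0 s B ≠ 0 ∧ s ∉ GoodS} with hBadS_def
    have hBadfin : BadS.Finite := by
      by_contra hinf
      have hinf' : BadS.Infinite := hinf
      obtain ⟨T, hT_sub, hT_card⟩ := hinf'.exists_subset_card_eq (d+1)
      have hHs : ∀ s ∈ T, (sub0 s A) * (PQ s).2 - (PQ s).1 * (sub0 s B) ≠ 0 := by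
        intro s hsT
        obtain ⟨hsJ, hsB, hsG⟩ := hT_sub hsT
        intro h0
        exact hsG (hGoodDeriv s hsJ hsB (sub_eq_zero.mp h0))
      set g : MvPolynomial (Fin N) ℝ := D0 * β lstar *
        ∏ s ∈ T, ((PQ s).2 * ((sub0 s A) * (PQ s).2 - (PQ s).1 * (sub0 s B)) * (sub0 s B))
        with hg_def
      have hgne : g ≠ 0 := by
        apply mul_ne_zero (mul_ne_zero hD0ne hlstar)
        apply Finset.prod_ne_zero_iff.mpr
        intro s hsT
        exact mul_ne_zero (mul_ne_zero (hQs s) (hHs s hsT)) (hT_sub hsT).2.1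
      obtain ⟨y, hyW, hgy⟩ := hWzd g hgne
      rw [hg_def, map_mul, map_mul, map_prod] at hgy
      obtain ⟨h12, hprody⟩ := mul_ne_zero_iff.mp hgy
      obtain ⟨hD0y, hβy⟩ := mul_ne_zero_iff.mp h12
      have hcomp : ∀ s ∈ T, MvPolynomial.eval y ((PQ s).2) ≠ 0 ∧
          MvPolynomial.eval y ((sub0 s A) * (PQ s).2 - (PQ s).1 * (sub0 s B)) ≠ 0 ∧
          MvPolynomial.eval y (sub0 s B) ≠ 0 := by
        intro s hsT
        rw [map_prod] at hprody
        have := Finset.prod_ne_zero_iff.mp hprody s hsT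
        rw [map_mul, map_mul] at this
        obtain ⟨h34, h5⟩ := mul_ne_zero_iff.mp this
        obtain ⟨h3, h4⟩ := mul_ne_zero_iff.mp h34
        exact ⟨h3, h4, h5⟩
      have hQy : ∀ m ∈ S, MvPolynomial.eval y (PQ (τ m)).2 ≠ 0 := by
        intro m hm
        exact Finset.prod_ne_zero_iff.mp hD0y m hm
      obtain ⟨a, b, hb, hdb, hrepy, hid⟩ := hDelta y hyW hQy
      have hyB : y ∈ Bbox := hyW.1
      have hroots : ∀ s ∈ T, b.eval s = 0 := by
        intro s hsT
        by_contra hbs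
        obtain ⟨hsJ, hsB, -⟩ := hT_sub hsT
        obtain ⟨hQsy, hHy_ne, hsubBy⟩ := hcomp s hsT
        have hBys : (By y).eval s ≠ 0 := by
          rwa [sub0_eval, hevalB] at hsubBy
        have hf1 : f (Fin.cons s y) = a.eval s / b.eval s := hrepy s hsJ hbs
        have hf2 : f (Fin.cons s y) = MvPolynomial.eval y (PQ s).1 / MvPolynomial.eval y (PQ s).2 :=
          hPQ s hsJ y hyB hQsy
        have hids := congrArg (Polynomial.eval s) hid
        simp only [Polynomial.eval_mul] at hids
        have hfAB : (Ay y).eval s = f (Fin.cons s y) * (By y).eval s := by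
          have hay : a.eval s = f (Fin.cons s y) * b.eval s := by rw [hf1]; field_simp
          have h5 : (Ay y).eval s * b.eval s
              = (f (Fin.cons s y) * (By y).eval s) * b.eval s := by
            rw [hids, hay]; ring
          exact mul_right_cancel₀ hbs h5
        apply hHy_ne
        rw [map_sub, map_mul, map_mul, sub0_eval, sub0_eval, hevalA, hevalB]
        have hPy : MvPolynomial.eval y (PQ s).1
            = f (Fin.cons s y) * MvPolynomial.eval y (PQ s).2 := by
          rw [hf2]; field_simp
        rw [hfAB, hPy]
        ring
      have hb0 : b = 0 := by
        apply Polynomial.eq_zero_of_natDegree_lt_card_of_eval_eq_zero b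
          (f := fun i : {x // x ∈ T} => (i : ℝ)) Subtype.val_injective
        · intro i; exact hroots i i.2
        · rw [Fintype.card_coe, hT_card]; omega
      exact hb hb0
    have hGoodCofin : (J \ GoodS).Finite := by
      apply Set.Finite.subset (hF0fin.union hBadfin)
      rintro s ⟨hsJ, hsG⟩
      by_cases h : sub0 s B = 0
      · exact Or.inl h
      · exact Or.inr ⟨hsJ, h, hsG⟩
    -- Step A conclusion: the representation holds on the whole starting box
    have hboxgood : ∀ z ∈ rbox lo hi, MvPolynomial.eval z B ≠ 0 →
        f z = MvPolynomial.eval z A / MvPolynomial.eval z B := by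
      intro z hz hBz
      have hIU : ∀ t ∈ Set.Ioo (lo 0 - z 0) (hi 0 - z 0),
          z + t • (Pi.single (0 : Fin (N+1)) 1 : Fin (N+1) → ℝ) ∈ U := by
        intro t ht
        apply hboxU
        intro j
        by_cases hj : j = 0
        · subst hj
          rw [add_smul_single_eq_update, Function.update_self]
          exact ⟨by linarith [ht.1], by linarith [ht.2]⟩
        · rw [add_smul_single_eq_update, Function.update_apply, if_neg hj]
          exact hz j
      have h0I : (0:ℝ) ∈ Set.Ioo (lo 0 - z 0) (hi 0 - z 0) :=
        ⟨by linarith [(hz 0).1], by linarith [(hz 0).2]⟩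
      apply saturation hreg A B z 0 _ isOpen_Ioo Set.ordConnected_Ioo hIU h0I hBz
      have hzcons : ∀ t : ℝ, Fin.cons (z 0 + t) (Fin.tail z)
          = z + t • (Pi.single (0 : Fin (N+1)) 1 : Fin (N+1) → ℝ) := by
        intro t
        rw [cons_vertical (z 0) t (Fin.tail z), Fin.cons_self_tail]
      have htail : Fin.tail z ∈ Bbox := by
        intro k
        simpa [hblo_def, hbhi_def, Fin.tail] using hz k.succ
      have hsubset : (Set.Ioo (lo 0 - z 0) (hi 0 - z 0) \
          ((fun t => z 0 + t) ⁻¹' (J \ GoodS) ∪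
           {t : ℝ | MvPolynomial.eval (z + t • (Pi.single (0:Fin (N+1)) 1 : Fin (N+1) → ℝ)) B = 0}))
          ⊆ {t | t ∈ Set.Ioo (lo 0 - z 0) (hi 0 - z 0) ∧
              MvPolynomial.eval (z + t • (Pi.single (0:Fin (N+1)) 1 : Fin (N+1) → ℝ)) B ≠ 0 ∧
              f (z + t • (Pi.single (0:Fin (N+1)) 1 : Fin (N+1) → ℝ)) =
                MvPolynomial.eval (z + t • (Pi.single (0:Fin (N+1)) 1 : Fin (N+1) → ℝ)) A /
                MvPolynomial.eval (z + t • (Pi.single (0:Fin (N+1)) 1 : Fin (N+1) → ℝ)) B} := by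
        rintro t ⟨htI, htbad⟩
        simp only [Set.mem_union, Set.mem_preimage, Set.mem_setOf_eq, not_or, Set.mem_diff,
          not_and, not_not] at htbad
        obtain ⟨htgood, htB⟩ := htbad
        have htJ : z 0 + t ∈ J := ⟨by linarith [htI.1], by linarith [htI.2]⟩
        have htG : z 0 + t ∈ GoodS := htgood htJ
        refine ⟨htI, htB, ?_⟩
        have := htG.2 (Fin.tail z) htail (by rw [hzcons]; exact htB)
        rwa [hzcons] at this
      apply Set.Infinite.mono hsubset
      apply Set.Infinite.diff
      · exact Set.Ioo_infinite (by linarith [(hz 0).1, (hz 0).2])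
      · apply Set.Finite.union
        · apply Set.Finite.preimage _ hGoodCofin
          intro a _ b _ hab
          simpa using hab
        · exact finite_line_zeros (linePoly_ne_zero_of_eval hBz)
    -- Step B: globalize over the connected set U
    set SGood : Set (Fin (N+1) → ℝ) := {x | ∃ lo' hi' : Fin (N+1) → ℝ,
      x ∈ rbox lo' hi' ∧ rbox lo' hi' ⊆ U ∧ ∀ z ∈ rbox lo' hi',
        MvPolynomial.eval z B ≠ 0 → f z = MvPolynomial.eval z A / MvPolynomial.eval z B}
      with hSG_def
    have hSGopen : IsOpen SGood := by
      rw [isOpen_iff_forall_mem_open]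
      rintro x ⟨lo', hi', hxbox, hboxU', hgood'⟩
      exact ⟨rbox lo' hi', fun z hz => ⟨lo', hi', hz, hboxU', hgood'⟩,
        isOpen_rbox _ _, hxbox⟩
    have hSGkey : ∀ x ∈ U, x ∈ closure SGood → x ∈ SGood := by
      intro x hxU hxcl
      obtain ⟨ρ, hρ0, hballx⟩ := Metric.isOpen_iff.mp hU x hxU
      obtain ⟨w, hwS, hwdist⟩ := Metric.mem_closure_iff.mp hxcl (ρ/4) (by linarith)
      obtain ⟨lo1, hi1, hwbox, hboxU1, hgood1⟩ := hwS
      set Lo : Fin (N+1) → ℝ := fun k => x k - ρ/2 with hLo_def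
      set Hi : Fin (N+1) → ℝ := fun k => x k + ρ/2 with hHi_def
      have hLoHiU : rbox Lo Hi ⊆ U := by
        intro z hz
        apply hballx
        rw [Metric.mem_ball, dist_pi_lt_iff hρ0]
        intro j
        rw [Real.dist_eq, abs_lt]
        have := hz j
        simp only [hLo_def, hHi_def, Set.mem_Ioo] at this
        exact ⟨by linarith [this.1], by linarith [this.2]⟩
      set lo2 : Fin (N+1) → ℝ := fun k => max (lo1 k) (x k - ρ/4) with hlo2_def
      set hi2 : Fin (N+1) → ℝ := fun k => min (hi1 k) (x k + ρ/4) with hhi2_def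
      have hwj : ∀ j, |w j - x j| < ρ/4 := by
        intro j
        have h1 : dist w x < ρ/4 := by rwa [dist_comm] at hwdist
        have := (dist_pi_lt_iff (by linarith : (0:ℝ) < ρ/4)).mp h1 j
        rwa [Real.dist_eq] at this
      have hlt2 : ∀ k, lo2 k < hi2 k := by
        intro k
        have h1 := (hwbox k).1
        have h2 := (hwbox k).2
        have h3 := abs_lt.mp (hwj k)
        rw [hlo2_def, hhi2_def]
        have hl : max (lo1 k) (x k - ρ/4) < w k := max_lt h1 (by linarith [h3.1])
        have hr : w k < min (hi1 k) (x k + ρ/4) := lt_min h2 (by linarith [h3.2])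
        linarith
      have hnest_lo : ∀ k, Lo k ≤ lo2 k := by
        intro k
        rw [hLo_def, hlo2_def]
        exact le_trans (by linarith) (le_max_right _ _)
      have hnest_hi : ∀ k, hi2 k ≤ Hi k := by
        intro k
        rw [hHi_def, hhi2_def]
        exact le_trans (min_le_right _ _) (by linarith)
      have hsub2 : rbox lo2 hi2 ⊆ rbox lo1 hi1 := by
        intro z hz k
        exact ⟨lt_of_le_of_lt (le_max_left _ _) (hz k).1,
          lt_of_lt_of_le (hz k).2 (min_le_left _ _)⟩
      have hgood2 : ∀ z ∈ rbox lo2 hi2, MvPolynomial.eval z B ≠ 0 →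
          MvPolynomial.eval z (1 : MvPolynomial (Fin (N+1)) ℝ) ≠ 0 →
          f z = MvPolynomial.eval z A / MvPolynomial.eval z B :=
        fun z hz hB _ => hgood1 z (hsub2 hz) hB
      have hext := ext_lemma hreg A B Lo Hi lo2 hi2 hnest_lo hnest_hi hlt2 hLoHiU
        1 one_ne_zero hgood2
      refine ⟨Lo, Hi, ?_, hLoHiU, hext⟩
      intro k
      rw [hLo_def, hHi_def]
      exact ⟨by simp; linarith, by simp; linarith⟩
    have hx₀S : x₀ ∈ SGood := by
      refine ⟨lo, hi, ?_, hboxU, hboxgood⟩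
      intro k
      simp only [hlo_def, hhi_def, Set.mem_Ioo]
      exact ⟨by linarith, by linarith⟩
    have hUsub : U ⊆ SGood := by
      apply IsPreconnected.subset_left_of_subset_union hSGopen
        isClosed_closure.isOpen_compl
        (Set.disjoint_compl_right_iff_subset.mpr subset_closure)
        (fun x hx => by
          by_cases h : x ∈ closure SGood
          · exact Or.inl (hSGkey x hx h)
          · exact Or.inr h)
        ⟨x₀, hx₀U, hx₀S⟩ hconn.isPreconnected
    refine ⟨A, B, hBne, ?_⟩
    intro x hx hBx
    obtain ⟨lo', hi', hxbox, hboxU', hgood'⟩ := hUsub hx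
    exact hgood' x hxbox hBx

end Main


/-- **Corollary 7.2** (without the codimension-two claim). A function on a nonempty
connected open set `U ⊆ ℝⁿ` that is regular on every axis-parallel open interval
contained in `U` agrees with a rational function `p/q` on `{x ∈ U : q(x) ≠ 0}`. -/
theorem rational_of_regular_on_axis_parallel_intervals
    (n : ℕ) (U : Set (Fin n → ℝ)) (hU : IsOpen U) (hne : U.Nonempty)
    (hconn : IsConnected U) (f : (Fin n → ℝ) → ℝ)
    (hreg : RegularOnAxisParallelIntervals n U f) :
    ∃ p q : MvPolynomial (Fin n) ℝ, q ≠ 0 ∧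
      ∀ x ∈ U, eval x q ≠ 0 → f x = eval x p / eval x q := by
  exact main_aux n U hU hne hconn f hreg
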